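/- Corollary 6: Let K ⊆ A_n be an irreducible cyclic code with monic irreducible parity-check polynomial h(x) of degree m > 1 and order n, where n ≠ q^m − 1 and gcd(n, q) = 1. Then the Hamming weight of every element of K is divisible by d = gcd(q − 1, n). -/

import Mathlib

open Polynomial

namespace CyclicCode

open scoped Classical

variable (F : Type) [Field F] [Fintype F]

/-- The ambient algebra `A_n = GF(q)[x]/(x^n - 1)`. -/
abbrev An (n : ℕ) := AdjoinRoot (X ^ n - 1 : F[X])

/-- The image of `x` in `A_n`. -/
noncomputable def xbar (n : ℕ) : An F n := AdjoinRoot.root _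

variable {F}

/-- The proportionality class `P_z = {α • z : α ∈ GF(q)^*}` of `z`. -/
def propClass {n : ℕ} (z : An F n) : Set (An F n) :=
  {w | ∃ α : F, α ≠ 0 ∧ w = α • z}

/-- The cycle `{x^j • z : j}` of `z`. -/
noncomputable def cyc {n : ℕ} (z : An F n) : Set (An F n) :=
  {w | ∃ j : ℕ, w = xbar F n ^ j * z}

/-- The period of `z`: the least positive `e` with `x^e * z = z`. -/
noncomputable def period {n : ℕ} (z : An F n) : ℕ :=
  sInf {e : ℕ | 0 < e ∧ xbar F n ^ e * z = z}

/-- The order of a polynomial `f`: the least positive `e` with `f ∣ X^e - 1`. -/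
noncomputable def polyOrder {F : Type} [Field F] (f : F[X]) : ℕ :=
  sInf {e : ℕ | 0 < e ∧ f ∣ X ^ e - 1}

/-- The representative of degree `< n` of an element of `A_n`. -/
noncomputable def rep {n : ℕ} (z : An F n) : F[X] :=
  if h : (X ^ n - 1 : F[X]).Monic then AdjoinRoot.modByMonicHom h z else 0

/-- The Hamming weight of an element of `A_n`. -/
noncomputable def wt {n : ℕ} (z : An F n) : ℕ := (rep z).support.card

/-- `c` is the minimal polynomial of `z ∈ A_n`: a polynomial annihilates `z`
iff it is a multiple of `c`. -/
def HasMinPoly {n : ℕ} (z : An F n) (c : F[X]) : Prop :=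
  ∀ f : F[X], AdjoinRoot.mk (X ^ n - 1 : F[X]) f * z = 0 ↔ c ∣ f

/-- The cyclic code of length `n` with parity-check polynomial `h`:
the ideal of `A_n` generated by `(X^n - 1)/h`. -/
noncomputable def code (F : Type) [Field F] (n : ℕ) (h : F[X]) : Ideal (An F n) :=
  Ideal.span {AdjoinRoot.mk (X ^ n - 1 : F[X]) ((X ^ n - 1) / h)}

/-- The proportionality classes meeting a set `C`. -/
def classesOf {n : ℕ} (C : Set (An F n)) : Set (Set (An F n)) :=
  {P | ∃ z ∈ C, P = propClass z}

/-- The cycles meeting a set `C`. -/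
noncomputable def cyclesOf {n : ℕ} (C : Set (An F n)) : Set (Set (An F n)) :=
  {S | ∃ z ∈ C, S = cyc z}

/-- The minimum Hamming distance of a linear code `J ⊆ A_n`. -/
noncomputable def minDist {n : ℕ} (J : Ideal (An F n)) : ℕ :=
  sInf {k : ℕ | ∃ z ∈ J, z ≠ 0 ∧ wt z = k}

/-- The multiplicative order of `q` modulo `n`. -/
noncomputable def multOrder (q n : ℕ) : ℕ :=
  sInf {e : ℕ | 0 < e ∧ q ^ e ≡ 1 [MOD n]}


/-- Counting lemma: a finite set closed under translation by `g` has cardinality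
divisible by the additive order of `g`. -/
lemma aux_count {G : Type} [AddCommGroup G] [Fintype G] (g : G) :
    ∀ N : ℕ, ∀ S : Finset G, S.card = N → (∀ i ∈ S, i + g ∈ S) →
      addOrderOf g ∣ S.card := by
  intro N
  induction N using Nat.strong_induction_on with
  | _ N ih =>
    intro S hcard hS
    rcases S.eq_empty_or_nonempty with rfl | ⟨s, hs⟩
    · simp
    set dd := addOrderOf g with hdd
    have hdpos : 0 < dd := addOrderOf_pos g
    have hsmul : ∀ k : ℕ, ∀ i ∈ S, i + k • g ∈ S := by
      intro k
      induction k with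
      | zero => intro i hi; simpa using hi
      | succ k ihk =>
        intro i hi
        have := hS _ (ihk i hi)
        have hrw : i + k • g + g = i + (k + 1) • g := by
          rw [succ_nsmul, ← add_assoc]
        rwa [hrw] at this
    set O : Finset G := (Finset.range dd).image (fun k => s + k • g) with hO
    have hcancel : ∀ a b : ℕ, a ≤ b → a • g = b • g → dd ∣ b - a := by
      intro a b hab h1
      have hba : (b - a) • g + a • g = a • g := by
        rw [← add_nsmul, Nat.sub_add_cancel hab, h1]
      have : (b - a) • g = 0 := by
        have hba' : (b - a) • g + a • g = 0 + a • g := by simpa using hba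
        simpa using add_right_cancel hba'
      exact addOrderOf_dvd_of_nsmul_eq_zero this
    have hinj : Set.InjOn (fun k => s + k • g) ((Finset.range dd : Finset ℕ) : Set ℕ) := by
      intro a ha b hb hab
      simp only [Finset.coe_range, Set.mem_Iio] at ha hb
      have h1 : a • g = b • g := by
        have := hab
        simpa using this
      rcases le_total a b with hle | hle
      · have := hcancel a b hle h1
        have : b - a = 0 := by
          rcases Nat.eq_zero_or_pos (b - a) with h0 | hpos
          · exact h0
          · exact absurd (Nat.le_of_dvd hpos this) (by omega)
        omega
      · have := hcancel b a hle h1.symm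
        have : a - b = 0 := by
          rcases Nat.eq_zero_or_pos (a - b) with h0 | hpos
          · exact h0
          · exact absurd (Nat.le_of_dvd hpos this) (by omega)
        omega
    have hOS : O ⊆ S := by
      intro x hx
      simp only [hO, Finset.mem_image, Finset.mem_range] at hx
      obtain ⟨k, _, rfl⟩ := hx
      exact hsmul k s hs
    have hcardO : O.card = dd := by
      rw [hO, Finset.card_image_of_injOn hinj, Finset.card_range]
    have hddzero : dd • g = 0 := addOrderOf_nsmul_eq_zero g
    have hS' : ∀ i ∈ S \ O, i + g ∈ S \ O := by
      intro i hi
      rw [Finset.mem_sdiff] at hi ⊢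
      refine ⟨hS i hi.1, fun hmem => hi.2 ?_⟩
      simp only [hO, Finset.mem_image, Finset.mem_range] at hmem ⊢
      obtain ⟨k, hk, hkeq⟩ := hmem
      rcases Nat.eq_zero_or_pos k with rfl | hkpos
      · refine ⟨dd - 1, by omega, ?_⟩
        have hstep : s + (dd - 1) • g + g = s + 0 • g := by
          rw [add_assoc, ← succ_nsmul, Nat.sub_add_cancel hdpos, hddzero]
          simp
        have : s + (dd - 1) • g + g = i + g := by rw [hstep, hkeq]
        exact (add_right_cancel this)
      · refine ⟨k - 1, by omega, ?_⟩
        have hstep : s + (k - 1) • g + g = s + k • g := by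
          rw [add_assoc, ← succ_nsmul, Nat.sub_add_cancel hkpos]
        have : s + (k - 1) • g + g = i + g := by rw [hstep, hkeq]
        exact (add_right_cancel this)
    have hsum : (S \ O).card + O.card = S.card :=
      Finset.card_sdiff_add_card_eq_card hOS
    have hlt : (S \ O).card < N := by omega
    have hrec := ih _ hlt (S \ O) rfl hS'
    have : dd ∣ (S \ O).card + O.card := Nat.dvd_add hrec (hcardO ▸ dvd_rfl)
    rwa [hsum] at this


/-- Coefficient relation: if `(X^n - 1) ∣ (X^e - C α) * p` and `deg p < n`, the
coefficients of `p` satisfy a cyclic proportionality relation. -/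
lemma aux_coeff {F : Type} [Field F] (n e : ℕ) (hn : 0 < n) (he : 0 < e) (hen : e ≤ n)
    (α : F) (p : F[X]) (hp : p.degree < (n : WithBot ℕ))
    (hdvd : (X ^ n - 1 : F[X]) ∣ X ^ e * p - C α * p) :
    ∀ i < n, α * p.coeff i = p.coeff ((i + (n - e)) % n) := by
  rcases eq_or_ne p 0 with rfl | hp0
  · simp
  obtain ⟨u, hu⟩ := hdvd
  have hdegXn : (X ^ n - 1 : F[X]).degree = (n : WithBot ℕ) := by
    rw [show (1 : F[X]) = C 1 from (C_1).symm]
    exact degree_X_pow_sub_C hn 1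
  have hXn0 : (X ^ n - 1 : F[X]) ≠ 0 := by
    intro h0
    rw [h0, degree_zero] at hdegXn
    exact absurd hdegXn.symm (by simp)
  -- degree bound on u
  have hudeg : u.degree < (e : WithBot ℕ) := by
    rcases eq_or_ne u 0 with rfl | hu0
    · rw [degree_zero]; exact WithBot.bot_lt_coe e
    have hlhs : (X ^ e * p - C α * p).degree < ((n + e : ℕ) : WithBot ℕ) := by
      apply lt_of_le_of_lt (degree_sub_le _ _)
      apply max_lt
      · rw [degree_mul, degree_X_pow]
        calc (e : WithBot ℕ) + p.degree < (e : WithBot ℕ) + (n : WithBot ℕ) := by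
              exact WithBot.add_lt_add_left (by simp) hp
          _ = ((n + e : ℕ) : WithBot ℕ) := by
              rw [Nat.cast_add]; ring
      · apply lt_of_le_of_lt (degree_mul_le _ _)
        apply lt_of_le_of_lt (add_le_add degree_C_le (le_refl p.degree))
        rw [zero_add]
        calc p.degree < (n : WithBot ℕ) := hp
          _ ≤ ((n + e : ℕ) : WithBot ℕ) := by
              exact_mod_cast Nat.le_add_right n e
    rw [hu, degree_mul, hdegXn] at hlhs
    have : (n : WithBot ℕ) + u.degree < (n : WithBot ℕ) + (e : WithBot ℕ) := by
      rw [show ((n + e : ℕ) : WithBot ℕ) = (n : WithBot ℕ) + (e : WithBot ℕ) by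
        exact_mod_cast rfl] at hlhs
      exact hlhs
    exact lt_of_add_lt_add_left this
  have hucoeff : ∀ i, e ≤ i → u.coeff i = 0 := by
    intro i hi
    apply coeff_eq_zero_of_degree_lt
    exact lt_of_lt_of_le hudeg (by exact_mod_cast hi)
  have hpcoeff : ∀ i, n ≤ i → p.coeff i = 0 := by
    intro i hi
    apply coeff_eq_zero_of_degree_lt
    exact lt_of_lt_of_le hp (by exact_mod_cast hi)
  -- rewrite hu into a convenient shape
  have hu' : p * X ^ e - C α * p = u * X ^ n - u := by
    rw [mul_comm p (X ^ e), hu]; ring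
  have eq1 : ∀ i, (if e ≤ i then p.coeff (i - e) else 0) - α * p.coeff i
      = (if n ≤ i then u.coeff (i - n) else 0) - u.coeff i := by
    intro i
    have := congrArg (fun q : F[X] => q.coeff i) hu'
    simpa [coeff_sub, coeff_C_mul, coeff_mul_X_pow'] using this
  intro i hi
  rcases le_or_gt e i with hei | hei
  · -- e ≤ i < n
    have hidx : (i + (n - e)) % n = i - e := by
      have h1 : i + (n - e) = (i - e) + n := by omega
      rw [h1, Nat.add_mod_right, Nat.mod_eq_of_lt (by omega)]
    have h2 := eq1 i
    rw [if_pos hei, if_neg (by omega), hucoeff i hei] at h2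
    rw [hidx]
    linear_combination -h2
  · -- i < e
    have hidx : (i + (n - e)) % n = n + i - e := by
      rw [Nat.mod_eq_of_lt (by omega)]
      omega
    have h2 := eq1 i
    rw [if_neg (by omega), if_neg (by omega)] at h2
    have hui : u.coeff i = α * p.coeff i := by linear_combination h2
    have h3 := eq1 (n + i)
    rw [if_pos (by omega), if_pos (by omega), hpcoeff (n + i) (by omega),
      hucoeff (n + i) (by omega), Nat.add_sub_cancel_left] at h3
    rw [hidx]
    have : p.coeff (n + i - e) = u.coeff i := by linear_combination h3
    rw [this, hui]

/-- Any element of an `F`-algebra fixed by `x ↦ x^q` (`q = |F|`) lies in the image of `F`. -/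
lemma aux_alg {F : Type} [Field F] [Fintype F] {K : Type} [Field K] [Algebra F K]
    (β : K) (hβ : β ^ Fintype.card F = β) : ∃ α : F, algebraMap F K α = β := by
  classical
  set q := Fintype.card F with hq
  have hq1 : 1 < q := Fintype.one_lt_card
  set P : K[X] := X ^ q - X with hP
  have hP0 : P ≠ 0 := by
    intro h0
    have := congrArg (fun r : K[X] => r.coeff q) h0
    simp only [hP, coeff_sub, coeff_X_pow, coeff_X, coeff_zero, if_pos rfl] at this
    rw [if_neg (by omega : ¬ (1 = q))] at this
    simp at this
  have hdeg : P.natDegree = q := by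
    rw [hP]
    have hlt : (X : K[X]).natDegree < (X ^ q : K[X]).natDegree := by
      rw [natDegree_X, natDegree_X_pow]; omega
    rw [natDegree_sub_eq_left_of_natDegree_lt hlt, natDegree_X_pow]
  set A : Finset K := Finset.univ.image (fun a : F => algebraMap F K a) with hA
  have hcardA : A.card = q := by
    rw [hA, Finset.card_image_of_injective _ (algebraMap F K).injective,
      Finset.card_univ, hq]
  have hroot : ∀ x : K, x ^ q = x → x ∈ P.roots.toFinset := by
    intro x hx
    rw [Multiset.mem_toFinset, mem_roots hP0]
    simp [hP, IsRoot, hx]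
  have hAsub : A ⊆ P.roots.toFinset := by
    intro x hx
    rw [hA, Finset.mem_image] at hx
    obtain ⟨a, _, rfl⟩ := hx
    exact hroot _ (by rw [← map_pow, hq, FiniteField.pow_card])
  have hTle : P.roots.toFinset.card ≤ q := by
    calc P.roots.toFinset.card ≤ Multiset.card P.roots := P.roots.toFinset_card_le
      _ ≤ P.natDegree := P.card_roots' 
      _ = q := hdeg
  by_contra hcon
  push_neg at hcon
  have hβA : β ∉ A := by
    intro hx
    rw [hA, Finset.mem_image] at hx
    obtain ⟨a, _, ha⟩ := hx
    exact hcon a ha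
  have hsub : insert β A ⊆ P.roots.toFinset := by
    intro x hx
    rcases Finset.mem_insert.mp hx with rfl | hx
    · exact hroot _ hβ
    · exact hAsub hx
  have := le_trans (Finset.card_le_card hsub) hTle
  rw [Finset.card_insert_of_notMem hβA, hcardA] at this
  omega



/-- Corollary 6: the Hamming weight of every element of an
irreducible nonprimitive cyclic code `K` is divisible by `d = gcd(q - 1, n)`. -/
theorem stmt11 {F : Type} [Field F] [Fintype F] (q n m : ℕ)
    (hcard : Fintype.card F = q) (hq : 2 < q) (hm : 1 < m)
    (h : F[X]) (hmon : h.Monic) (hirr : Irreducible h) (hdeg : h.natDegree = m)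
    (hord : polyOrder h = n) (hnp : n ≠ q ^ m - 1) (hco : Nat.Coprime n q) :
    ∀ z : An F n, z ∈ code F n h → Nat.gcd (q - 1) n ∣ wt z := by
  intro z hz
  haveI : Fact (Irreducible h) := ⟨hirr⟩
  set K := AdjoinRoot h with hK
  set γ : K := AdjoinRoot.root h with hγ
  have hhne : h ≠ 0 := hmon.ne_zero
  haveI : Module.Finite F K := PowerBasis.finite (AdjoinRoot.powerBasis hhne)
  haveI : Finite K := Module.finite_of_finite F
  -- γ ≠ 0
  have hγ0 : γ ≠ 0 := by
    intro h0
    have hdvdX : h ∣ X := by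
      rw [← AdjoinRoot.mk_eq_zero, AdjoinRoot.mk_X]
      exact h0
    have := Polynomial.natDegree_le_of_dvd hdvdX X_ne_zero
    rw [natDegree_X, hdeg] at this
    omega
  obtain ⟨u, hu⟩ := hγ0.isUnit
  have hop : 0 < orderOf γ := by
    rw [← hu, orderOf_units]
    exact orderOf_pos u
  have hiff : ∀ e : ℕ, (h ∣ X ^ e - 1) ↔ γ ^ e = 1 := by
    intro e
    rw [← AdjoinRoot.mk_eq_zero, map_sub, map_pow, AdjoinRoot.mk_X, map_one,
      sub_eq_zero]
  have hSne : orderOf γ ∈ {e : ℕ | 0 < e ∧ h ∣ X ^ e - 1} :=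
    ⟨hop, (hiff _).mpr (pow_orderOf_eq_one γ)⟩
  have hnmem : n ∈ {e : ℕ | 0 < e ∧ h ∣ X ^ e - 1} := by
    rw [← hord]
    exact Nat.sInf_mem ⟨_, hSne⟩
  obtain ⟨hn, hdvdn⟩ := hnmem
  have hγn : γ ^ n = 1 := (hiff n).mp hdvdn
  have hordγ : orderOf γ = n := by
    apply le_antisymm
    · exact Nat.le_of_dvd hn (orderOf_dvd_of_pow_eq_one hγn)
    · rw [← hord]; exact Nat.sInf_le hSne
  -- the scalar α
  set d := Nat.gcd (q - 1) n with hd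
  have hdn : d ∣ n := Nat.gcd_dvd_right _ _
  have hdq : d ∣ q - 1 := Nat.gcd_dvd_left _ _
  have hdpos : 0 < d := Nat.gcd_pos_of_pos_right _ hn
  set e := n / d with he
  have hepos : 0 < e := Nat.div_pos (Nat.le_of_dvd hn hdn) hdpos
  have hen : e ≤ n := Nat.div_le_self _ _
  have hedvd : e ∣ n := Nat.div_dvd_of_dvd hdn
  have hne' : n / e = d := Nat.div_div_self hdn hn.ne'
  set β := γ ^ e with hβ
  have hordβ : orderOf β = d := by
    rw [hβ, orderOf_pow' γ hepos.ne', hordγ, Nat.gcd_eq_right hedvd, hne']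
  have hβq1 : β ^ (q - 1) = 1 := orderOf_dvd_iff_pow_eq_one.mp (hordβ ▸ hdq)
  have hβq : β ^ q = β := by
    have hq' : q = (q - 1) + 1 := by omega
    rw [hq', pow_succ, hβq1, one_mul]
  obtain ⟨α, hα⟩ := aux_alg β (by rw [hcard]; exact hβq)
  have hα0 : α ≠ 0 := by
    intro h0
    rw [h0, map_zero] at hα
    have hβd : β ^ d = 1 := by rw [← hordβ]; exact pow_orderOf_eq_one β
    rw [← hα, zero_pow hdpos.ne'] at hβd
    exact zero_ne_one hβd
  have hhdvd2 : h ∣ X ^ e - C α := by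
    have haev : (aeval γ) (X ^ e - C α : F[X]) = 0 := by
      rw [map_sub, map_pow, aeval_X, aeval_C, hα]
      exact sub_self β
    rwa [hγ, AdjoinRoot.aeval_eq, AdjoinRoot.mk_eq_zero] at haev
    -- code membership and the key relation
  have hdegXn : ((X : F[X]) ^ n - 1).degree = (n : WithBot ℕ) := by
    rw [show (1 : F[X]) = C 1 from (C_1).symm]
    exact degree_X_pow_sub_C hn 1
  have hXmon : ((X : F[X]) ^ n - 1).Monic := by
    have := monic_X_pow_sub_C (1 : F) hn.ne'
    simpa using this
  have hfac : h * ((X ^ n - 1 : F[X]) / h) = X ^ n - 1 :=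
    EuclideanDomain.mul_div_cancel' hhne hdvdn
  rw [code, Ideal.mem_span_singleton] at hz
  obtain ⟨t, ht⟩ := hz
  have hkey : (AdjoinRoot.mk (X ^ n - 1 : F[X]) (X ^ e - C α)) * z = 0 := by
    rw [ht, ← mul_assoc, ← map_mul]
    have hdv : (X ^ n - 1 : F[X]) ∣ (X ^ e - C α) * ((X ^ n - 1) / h) := by
      obtain ⟨w, hw⟩ := hhdvd2
      exact ⟨w, by rw [hw, mul_comm h w, mul_assoc, hfac, mul_comm]⟩
    rw [AdjoinRoot.mk_eq_zero.mpr hdv, zero_mul]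
  obtain ⟨f, hf⟩ := AdjoinRoot.mk_surjective z
  set p : F[X] := f %ₘ (X ^ n - 1) with hp
  have hrep : rep z = p := by
    rw [rep, dif_pos hXmon, ← hf, AdjoinRoot.modByMonicHom_mk]
  have hdegp : p.degree < (n : WithBot ℕ) := by
    have := degree_modByMonic_lt f hXmon
    rwa [hdegXn] at this
  have hmkp : AdjoinRoot.mk (X ^ n - 1 : F[X]) p = z := by
    rw [← hf]
    conv_rhs => rw [← modByMonic_add_div f (X ^ n - 1 : F[X])]
    rw [map_add, map_mul, AdjoinRoot.mk_self, zero_mul, add_zero]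
  have hdvd3 : (X ^ n - 1 : F[X]) ∣ X ^ e * p - C α * p := by
    rw [← AdjoinRoot.mk_eq_zero]
    have hexp : (X : F[X]) ^ e * p - C α * p = (X ^ e - C α) * p := by ring
    rw [hexp, map_mul, hmkp, hkey]
  have hrel := aux_coeff n e hn hepos hen α p hdegp hdvd3
  -- pass to `ZMod n`
  haveI : NeZero n := ⟨hn.ne'⟩
  set g : ZMod n := ((n - e : ℕ) : ZMod n) with hg
  set S : Finset (ZMod n) := p.support.image (Nat.cast : ℕ → ZMod n) with hS
  have hsupp : ∀ i ∈ p.support, i < n := by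
    intro i hi
    have h1 : (i : WithBot ℕ) ≤ p.degree := le_degree_of_ne_zero (mem_support_iff.mp hi)
    exact_mod_cast lt_of_le_of_lt h1 hdegp
  have hcardS : S.card = p.support.card := by
    rw [hS]
    apply Finset.card_image_of_injOn
    intro a ha b hb hab
    have ha' := hsupp a ha
    have hb' := hsupp b hb
    have h2 := congrArg ZMod.val hab
    rwa [ZMod.val_cast_of_lt ha', ZMod.val_cast_of_lt hb'] at h2
  have hmemS : ∀ i : ZMod n, i ∈ S ↔ p.coeff i.val ≠ 0 := by
    intro i
    simp only [hS, Finset.mem_image, mem_support_iff]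
    constructor
    · rintro ⟨k, hk, rfl⟩
      have hkn : k < n := hsupp k (mem_support_iff.mpr hk)
      rwa [ZMod.val_cast_of_lt hkn]
    · intro hne2
      exact ⟨i.val, hne2, by simp [ZMod.natCast_val, ZMod.cast_id]⟩
  have hclosed : ∀ i ∈ S, i + g ∈ S := by
    intro i hi
    rw [hmemS] at hi ⊢
    have hval : (i + g).val = (i.val + (n - e)) % n := by
      rw [ZMod.val_add]
      congr 1
      rw [hg, ZMod.val_cast_of_lt (by omega : n - e < n)]
    rw [hval, ← hrel i.val (ZMod.val_lt i)]
    exact mul_ne_zero hα0 hi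
  have hord_g : addOrderOf g = d := by
    rw [hg, ZMod.addOrderOf_coe _ hn.ne']
    have hgcd : Nat.gcd n (n - e) = e := by
      apply Nat.dvd_antisymm
      · have h1 : Nat.gcd n (n - e) ∣ n := Nat.gcd_dvd_left _ _
        have h2 : Nat.gcd n (n - e) ∣ n - e := Nat.gcd_dvd_right _ _
        have h3 := Nat.dvd_sub h1 h2
        rwa [show n - (n - e) = e by omega] at h3
      · exact Nat.dvd_gcd hedvd (Nat.dvd_sub hedvd dvd_rfl)
    rw [hgcd, hne']
  have hfin := aux_count g S.card S rfl hclosed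
  rw [hord_g, hcardS] at hfin
  rw [wt, hrep]
  exact hfin


end CyclicCode
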